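/- arXiv:2108.08642 — 2 statements merged into one kernel-verified Lean document; each statement's English description precedes it below -/
import Mathlib

section
/- Let D be a finite digit set, G a group with identity e, W : D × D → G a spin map, s the level-M supertile spin function defined by s(d, []) = e and s(d, i :: w) = W(d, i)·s(i, w), and χ : G → ℂˣ a group homomorphism. Suppose the spin data is χ-unitary, i.e. for all i ≠ j in D, Σ_{d∈D} χ(W(d,i))·conj(χ(W(d,j))) = 0. Then for every M ≥ 1 and all words u = (i_{M-1}, …, i_0) and v = (j_{M-1}, …, j_0) in D^M whose leading digits differ (i_{M-1} ≠ j_{M-1}), one has Σ_{d∈D} χ(s(d,u))·conj(χ(s(d,v))) = 0. That is, the M-th power of a χ-unitary spin substitution is again χ-unitary. -/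
/-- The level-`M` supertile spin function `s : D → List D → G`, defined recursively by
`s(d, []) = e` and `s(d, i :: w) = W(d, i) · s(i, w)`. -/
def supertileSpin {D G : Type*} [Group G] (W : D → D → G) : D → List D → G
  | _, [] => 1
  | d, i :: w => W d i * supertileSpin W i w

/-- If the spin data `(D, G, W)` is `χ`-unitary, i.e.
`∑_{d ∈ D} χ(W(d,i)) · conj(χ(W(d,j))) = 0` for all `i ≠ j`, then the `M`-th power of the
spin substitution is again `χ`-unitary: for all words `u = (i_{M-1}, …, i_0)` and
`v = (j_{M-1}, …, j_0)` of length `M ≥ 1` whose leading digits differ,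
`∑_{d ∈ D} χ(s(d,u)) · conj(χ(s(d,v))) = 0`. -/
theorem supertileSpin_chiUnitary {D G : Type*} [Fintype D] [Group G]
    (W : D → D → G) (χ : G →* ℂˣ)
    (hW : ∀ i j : D, i ≠ j →
      ∑ d : D, (χ (W d i) : ℂ) * (starRingEnd ℂ) (χ (W d j) : ℂ) = 0) :
    ∀ (M : ℕ), 1 ≤ M → ∀ (u v : List D), u.length = M → v.length = M →
      ∀ (i j : D), i ≠ j → u.head? = some i → v.head? = some j →
        ∑ d : D, (χ (supertileSpin W d u) : ℂ) *
          (starRingEnd ℂ) (χ (supertileSpin W d v) : ℂ) = 0 := by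
  intro M _ u v _ _ i j hij hu hv
  rcases u with _ | ⟨iu, u'⟩
  · simp at hu
  rcases v with _ | ⟨jv, v'⟩
  · simp at hv
  simp only [List.head?, Option.some.injEq] at hu hv
  subst hu; subst hv
  simp only [supertileSpin, map_mul, Units.val_mul]
  calc ∑ d : D, (χ (W d iu) : ℂ) * (χ (supertileSpin W iu u') : ℂ) *
        ((starRingEnd ℂ) (χ (W d jv) : ℂ) * (starRingEnd ℂ) (χ (supertileSpin W jv v') : ℂ))
      = (∑ d : D, (χ (W d iu) : ℂ) * (starRingEnd ℂ) (χ (W d jv) : ℂ)) *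
        ((χ (supertileSpin W iu u') : ℂ) * (starRingEnd ℂ) (χ (supertileSpin W jv v') : ℂ)) := by
        rw [Finset.sum_mul]
        apply Finset.sum_congr rfl
        intro d _
        ring
    _ = 0 := by rw [hW iu jv hij, zero_mul]
end

section
/- Let A be an m × m complex matrix and B an n × n complex matrix (m, n ≥ 1), such that every entry of A and every entry of B has modulus 1. Then (1/√(mn))·(A ⊗ B) is a unitary matrix if and only if both (1/√m)·A and (1/√n)·B are unitary matrices. -/
open Matrix
open scoped Kronecker

lemma kron_conjTranspose {m n p q : Type*} (A : Matrix m n ℂ) (B : Matrix p q ℂ) :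
    (A ⊗ₖ B)ᴴ = Aᴴ ⊗ₖ Bᴴ := by
  ext ⟨i, l⟩ ⟨j, k⟩
  simp [conjTranspose_apply, kronecker_apply, _root_.map_mul]

lemma gram_diag {m : ℕ} (hm : 1 ≤ m) (A : Matrix (Fin m) (Fin m) ℂ)
    (hA : ∀ i j, ‖A i j‖ = 1) (i : Fin m) :
    ((((Real.sqrt m : ℂ))⁻¹ • A) * (((Real.sqrt m : ℂ))⁻¹ • A)ᴴ) i i = 1 := by
  have hm0 : (m : ℂ) ≠ 0 := Nat.cast_ne_zero.mpr (by omega)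
  have hsc : star ((Real.sqrt m : ℂ))⁻¹ = ((Real.sqrt m : ℂ))⁻¹ := by
    simp [star_inv₀, Complex.star_def, Complex.conj_ofReal]
  have hcc : ((Real.sqrt m : ℂ))⁻¹ * ((Real.sqrt m : ℂ))⁻¹ = (m : ℂ)⁻¹ := by
    rw [← mul_inv, ← Complex.ofReal_mul, Real.mul_self_sqrt (Nat.cast_nonneg m)]
    push_cast; ring
  have key : ∀ k : Fin m, ((Real.sqrt m : ℂ))⁻¹ * A i k *
      star (((Real.sqrt m : ℂ))⁻¹ * A i k) = (m : ℂ)⁻¹ := by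
    intro k
    have h2 : A i k * star (A i k) = 1 := by
      rw [Complex.star_def, Complex.mul_conj]
      norm_cast
      rw [Complex.normSq_eq_norm_sq, hA i k]; norm_num
    calc ((Real.sqrt m : ℂ))⁻¹ * A i k * star (((Real.sqrt m : ℂ))⁻¹ * A i k)
        = (((Real.sqrt m : ℂ))⁻¹ * star ((Real.sqrt m : ℂ))⁻¹) *
          (A i k * star (A i k)) := by rw [star_mul']; ring
      _ = (m : ℂ)⁻¹ := by rw [hsc, h2, mul_one, hcc]
  simp only [mul_apply, conjTranspose_apply, Matrix.smul_apply, smul_eq_mul]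
  rw [Finset.sum_congr rfl fun k _ => key k]
  simp only [Finset.sum_const, Finset.card_univ, Fintype.card_fin, nsmul_eq_mul]
  field_simp


/-- For square complex matrices `A` (of size `m`) and `B` (of size `n`) with all entries of
modulus 1, `(1/√(mn))·(A ⊗ B)` is unitary if and only if both `(1/√m)·A` and `(1/√n)·B`
are unitary. -/
theorem kronecker_unitary_iff {m n : ℕ} (hm : 1 ≤ m) (hn : 1 ≤ n)
    (A : Matrix (Fin m) (Fin m) ℂ) (B : Matrix (Fin n) (Fin n) ℂ)
    (hA : ∀ i j, ‖A i j‖ = 1) (hB : ∀ i j, ‖B i j‖ = 1) :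
    ((Real.sqrt (m * n) : ℂ))⁻¹ • (A ⊗ₖ B) ∈ Matrix.unitaryGroup (Fin m × Fin n) ℂ ↔
      (((Real.sqrt m : ℂ))⁻¹ • A ∈ Matrix.unitaryGroup (Fin m) ℂ ∧
       ((Real.sqrt n : ℂ))⁻¹ • B ∈ Matrix.unitaryGroup (Fin n) ℂ) := by
  set U : Matrix (Fin m) (Fin m) ℂ := ((Real.sqrt m : ℂ))⁻¹ • A with hU
  set V : Matrix (Fin n) (Fin n) ℂ := ((Real.sqrt n : ℂ))⁻¹ • B with hV
  have hsplit : ((Real.sqrt (m * n) : ℂ))⁻¹ • (A ⊗ₖ B) = U ⊗ₖ V := by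
    rw [hU, hV, smul_kronecker, kronecker_smul, smul_smul]
    congr 1
    rw [← mul_inv, ← Complex.ofReal_mul, ← Real.sqrt_mul (Nat.cast_nonneg m)]
  rw [hsplit, Matrix.mem_unitaryGroup_iff, Matrix.mem_unitaryGroup_iff,
    Matrix.mem_unitaryGroup_iff]
  simp only [Matrix.star_eq_conjTranspose]
  rw [kron_conjTranspose, ← mul_kronecker_mul]
  constructor
  · intro h
    obtain ⟨l⟩ : Nonempty (Fin n) := ⟨⟨0, hn⟩⟩
    obtain ⟨i0⟩ : Nonempty (Fin m) := ⟨⟨0, hm⟩⟩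
    have hPd : ∀ i, (U * Uᴴ) i i = 1 := gram_diag hm A hA
    have hQd : ∀ l, (V * Vᴴ) l l = 1 := gram_diag hn B hB
    constructor
    · ext i j
      have := congrFun (congrFun h (i, l)) (j, l)
      rw [kronecker_apply, hQd l, mul_one] at this
      rw [this]
      by_cases hij : i = j <;> simp [hij, one_apply]
    · ext k l'
      have := congrFun (congrFun h (i0, k)) (i0, l')
      rw [kronecker_apply, hPd i0, one_mul] at this
      rw [this]
      by_cases hkl : k = l' <;> simp [hkl, one_apply]
  · rintro ⟨h1, h2⟩
    rw [h1, h2, one_kronecker_one]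
end
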